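/- Let k be a field, A a unital associative k-algebra, u ∈ A, and let p = p_1^{m_1}···p_r^{m_r} ∈ k[x] be a monic annihilating polynomial of u whose monic irreducible factors p_1, …, p_r are pairwise distinct and separable. Set p̃ = p_1···p_r and p̄ = p/p̃, let q ∈ k[x] satisfy q·p̃' ≡ 1 (mod p̄), and define d_0 = u, d_{n+1} = d_n − p̃(d_n)·q(d_n). Then for every n ≥ 0 there exists an element b of the unital subalgebra k[u] generated by u such that p̃(d_n) = p̃(u)^{2^n}·b. -/

import Mathlib

open Polynomial

-- helper: a - X divides aeval a f - f in k[X]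
private lemma aux_sub_dvd {k : Type*} [CommRing k] (a f : k[X]) :
    (a - X) ∣ aeval a f - f := by
  have h := sub_dvd_eval_sub a X (f.map (C : k →+* k[X]))
  rw [aeval_def, Polynomial.algebraMap_eq]
  simpa [eval_map, aeval_X_left_apply] using h

theorem newton_iteration_quadratic_convergence
    {k : Type*} [Field k] {A : Type*} [Ring A] [Algebra k A]
    (u : A) (r : ℕ) (hr : 0 < r) (pf : Fin r → k[X]) (mexp : Fin r → ℕ)
    (hmon : ∀ i, (pf i).Monic) (hirr : ∀ i, Irreducible (pf i))
    (hsep : ∀ i, (pf i).Separable)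
    (hdist : ∀ i j, i ≠ j → pf i ≠ pf j)
    (hm1 : ∀ i, 1 ≤ mexp i)
    (p ptilde pbar : k[X])
    (hp : p = ∏ i, pf i ^ mexp i)
    (hpt : ptilde = ∏ i, pf i)
    (hpb : p = ptilde * pbar)
    (hann : aeval u p = 0)
    (q : k[X]) (hq : pbar ∣ q * derivative ptilde - 1)
    (d : ℕ → A) (hd0 : d 0 = u)
    (hdrec : ∀ n, d (n + 1) = d n - aeval (d n) ptilde * aeval (d n) q) :
    ∀ n : ℕ, ∃ b ∈ Algebra.adjoin k ({u} : Set A),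
      aeval (d n) ptilde = (aeval u ptilde) ^ (2 ^ n) * b := by
  obtain ⟨s, hs⟩ := hq
  -- polynomial model of the iteration
  set D : ℕ → k[X] := fun n => Nat.rec X (fun _ a => a - aeval a ptilde * aeval a q) n with hD
  have hD0 : D 0 = X := rfl
  have hDs : ∀ n, D (n + 1) = D n - aeval (D n) ptilde * aeval (D n) q := fun n => rfl
  -- d n is the image of D n
  have hdu : ∀ n, d n = aeval u (D n) := by
    intro n
    induction n with
    | zero => simp [hd0, hD0]
    | succ n ih =>
      rw [hdrec, hDs, map_sub, map_mul, ← comp_eq_aeval, aeval_comp,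
        ← comp_eq_aeval (p := q), aeval_comp, ← ih]
  -- ptilde divides D n - X
  have hF1 : ∀ n, ptilde ∣ D n - X := by
    intro n
    induction n with
    | zero => simp [hD0]
    | succ n ih =>
      have h1 : ptilde ∣ aeval (D n) ptilde := by
        have := (ih.trans (aux_sub_dvd (D n) ptilde))
        have h2 : aeval (D n) ptilde = (aeval (D n) ptilde - ptilde) + ptilde := by ring
        rw [h2]; exact dvd_add this dvd_rfl
      have : D (n + 1) - X = (D n - X) - aeval (D n) ptilde * aeval (D n) q := by
        rw [hDs]; ring
      rw [this]
      exact dvd_sub ih (h1.mul_right _)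
  -- p divides aeval a p whenever ptilde divides a - X
  have hF2 : ∀ a : k[X], ptilde ∣ a - X → p ∣ aeval a p := by
    intro a ha
    have hdvd : ∀ i, pf i ^ mexp i ∣ aeval a (pf i) ^ mexp i := by
      intro i
      apply pow_dvd_pow_of_dvd
      have h1 : pf i ∣ a - X := dvd_trans (by rw [hpt]; exact Finset.dvd_prod_of_mem _ (Finset.mem_univ i)) ha
      have h2 : pf i ∣ aeval a (pf i) - pf i := h1.trans (aux_sub_dvd a (pf i))
      have h3 : aeval a (pf i) = (aeval a (pf i) - pf i) + pf i := by ring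
      rw [h3]; exact dvd_add h2 dvd_rfl
    have hcop : Pairwise (Function.onFun IsCoprime fun i => pf i ^ mexp i) := by
      intro i j hij
      apply IsCoprime.pow
      rw [(hirr i).coprime_iff_not_dvd]
      intro hdvd'
      exact hdist i j hij (eq_of_monic_of_associated (hmon i) (hmon j)
        ((hirr i).associated_of_dvd (hirr j) hdvd'))
    have : aeval a p = ∏ i, aeval a (pf i) ^ mexp i := by
      rw [hp, map_prod]; simp [map_pow]
    rw [this, hp]
    exact Fintype.prod_dvd_of_coprime hcop fun i =>
      (hdvd i).trans (Finset.dvd_prod_of_mem (fun j => aeval a (pf j) ^ mexp j) (Finset.mem_univ i))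
  -- evaluation lemma
  have heval : ∀ (x f : k[X]), (f.map (Polynomial.C : k →+* k[X])).eval x = aeval x f := by
    intro x f
    rw [eval_map, aeval_def, Polynomial.algebraMap_eq]
  -- main induction: aeval (D n) ptilde lies in the ideal (ptilde^(2^n), p)
  have hF3 : ∀ n, ∃ B E : k[X], aeval (D n) ptilde = ptilde ^ 2 ^ n * B + p * E := by
    intro n
    induction n with
    | zero => exact ⟨1, 0, by simp [hD0, aeval_X_left_apply]⟩
    | succ n ih =>
      obtain ⟨B, E, hBC⟩ := ih
      have hse : aeval (D n) q * aeval (D n) (derivative ptilde) - 1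
          = aeval (D n) pbar * aeval (D n) s := by
        have h := congrArg (aeval (D n)) hs
        simpa [map_sub, map_mul] using h
      have hpa : aeval (D n) p = aeval (D n) ptilde * aeval (D n) pbar := by
        rw [hpb, map_mul]
      obtain ⟨w, hw⟩ := hF2 (D n) (hF1 n)
      have hpow : ptilde ^ 2 ^ (n + 1) = ptilde ^ 2 ^ n * ptilde ^ 2 ^ n := by
        rw [← pow_add]; congr 1; omega
      obtain ⟨c, hc⟩ := Polynomial.binomExpansion (ptilde.map (Polynomial.C : k →+* k[X]))
        (D n) (-(aeval (D n) ptilde * aeval (D n) q))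
      rw [derivative_map] at hc
      simp only [heval] at hc
      have hD1 : D (n + 1) = D n + -(aeval (D n) ptilde * aeval (D n) q) := by
        rw [hDs]; ring
      refine ⟨c * (aeval (D n) q) ^ 2 * B ^ 2,
        -(w * aeval (D n) s) + c * (aeval (D n) q) ^ 2 *
          (2 * ptilde ^ 2 ^ n * B * E + p * E ^ 2), ?_⟩
      rw [hD1, hc, hpow]
      linear_combination (-(aeval (D n) ptilde)) * hse + (aeval (D n) s) * hpa
        + (-(aeval (D n) s)) * hw
        + (c * (aeval (D n) q) ^ 2 * (aeval (D n) ptilde + ptilde ^ 2 ^ n * B + p * E)) * hBC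
  -- conclusion
  intro n
  obtain ⟨B, E, hBC⟩ := hF3 n
  refine ⟨aeval u B, aeval_mem_adjoin_singleton _ _, ?_⟩
  have h1 : aeval (d n) ptilde = aeval u (aeval (D n) ptilde) := by
    rw [hdu n, ← aeval_comp, comp_eq_aeval]
  rw [h1, hBC]
  simp [map_add, map_mul, map_pow, hann]
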